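/- Let T be a tree and r a vertex of T, with branches T₁', ..., T_k' formed by adding r back to each component of T − r. Then the local mean subtree orders satisfy μ_T(r) − 1 = ∑_{i=1}^k (μ_{T_i'}(r) − 1). -/

import Mathlib

open scoped Classical

/-- The subtrees (nonempty connected induced subgraphs) of a graph, as vertex sets. -/
noncomputable def subtrees {V : Type*} [Fintype V] (G : SimpleGraph V) :
    Finset (Finset V) :=
  Finset.univ.filter (fun s => s.Nonempty ∧ (G.induce (s : Set V)).Connected)

/-- The subtrees of a graph containing a fixed vertex `r`. -/
noncomputable def subtreesThrough {V : Type*} [Fintype V] (G : SimpleGraph V) (r : V) :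
    Finset (Finset V) :=
  Finset.univ.filter (fun s => r ∈ s ∧ (G.induce (s : Set V)).Connected)

/-- The branch of a neighbour `u` of `r` in a tree `G`: the vertices `v ≠ r` whose
every walk to `r` passes through `u` (the component of `G − r` containing `u`). -/
def branch {V : Type*} (G : SimpleGraph V) (r u : V) : Set V :=
  {v | v ≠ r ∧ ∀ p : G.Walk v r, u ∈ p.support}

/-- The subtrees of the branch-with-root tree `T_u'` (the branch of `u` together with
`r`) that contain the root `r`. -/
noncomputable def branchSubtrees {V : Type*} [Fintype V] (G : SimpleGraph V) (r u : V) :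
    Finset (Finset V) :=
  Finset.univ.filter (fun s => r ∈ s ∧ (s : Set V) ⊆ branch G r u ∪ {r} ∧
    (G.induce (s : Set V)).Connected)

namespace TreeAux
open SimpleGraph Walk

variable {V : Type*} {G : SimpleGraph V}

lemma getVert_mem_support {u v : V} (p : G.Walk u v) (i : ℕ) : p.getVert i ∈ p.support := by
  induction p generalizing i with
  | nil => simp [Walk.getVert]
  | cons h q ih =>
    cases i with
    | zero => simp
    | succ n =>
      rw [Walk.getVert_cons_succ]
      exact List.mem_cons_of_mem _ (ih n)

noncomputable def pth (hG : G.IsTree) (r v : V) : G.Walk r v :=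
  (hG.existsUnique_path r v).exists.choose

lemma pth_isPath (hG : G.IsTree) (r v : V) : (pth hG r v).IsPath :=
  (hG.existsUnique_path r v).exists.choose_spec

lemma eq_pth (hG : G.IsTree) {r v : V} {p : G.Walk r v} (hp : p.IsPath) : p = pth hG r v :=
  (hG.existsUnique_path r v).unique hp (pth_isPath hG r v)

lemma pth_support_subset (hG : G.IsTree) {r v : V} (q : G.Walk r v) :
    (pth hG r v).support ⊆ q.support := by
  rw [← eq_pth hG q.bypass_isPath]
  exact q.support_bypass_subset

lemma mem_branch_iff (hG : G.IsTree) {r u v : V} :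
    v ∈ branch G r u ↔ v ≠ r ∧ u ∈ (pth hG r v).support := by
  constructor
  · rintro ⟨hv, h⟩
    refine ⟨hv, ?_⟩
    have h2 := h (pth hG r v).reverse
    rwa [Walk.support_reverse, List.mem_reverse] at h2
  · rintro ⟨hv, h⟩
    refine ⟨hv, fun p => ?_⟩
    have h2 := pth_support_subset hG p.reverse h
    rwa [Walk.support_reverse, List.mem_reverse] at h2

lemma pth_self (hG : G.IsTree) (r : V) : pth hG r r = Walk.nil :=
  (eq_pth hG Walk.IsPath.nil).symm

lemma exists_adj_branch (hG : G.IsTree) {r v : V} (hv : v ≠ r) :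
    ∃ u, G.Adj r u ∧ v ∈ branch G r u := by
  have hnn : ¬ (pth hG r v).Nil := by
    intro h
    rw [Walk.nil_iff_support_eq] at h
    have := (pth hG r v).end_mem_support
    rw [h] at this
    exact hv (List.mem_singleton.mp this)
  exact ⟨(pth hG r v).getVert 1, Walk.adj_snd hnn,
    (mem_branch_iff hG).2 ⟨hv, getVert_mem_support _ 1⟩⟩

lemma eq_getVert_one (hG : G.IsTree) {r u v : V} (hadj : G.Adj r u) (hv : v ∈ branch G r u) :
    u = (pth hG r v).getVert 1 := by
  classical
  have hu : u ∈ (pth hG r v).support := ((mem_branch_iff hG).1 hv).2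
  have ht : (pth hG r v).takeUntil u hu = Walk.cons hadj Walk.nil := by
    apply ((hG.existsUnique_path r u).unique)
    · exact (pth_isPath hG r v).takeUntil hu
    · rw [Walk.cons_isPath_iff]
      exact ⟨Walk.IsPath.nil, by simp [hadj.ne]⟩
  have hspec := (pth hG r v).take_spec hu
  rw [← hspec, ht, Walk.getVert_append]
  simp

lemma branch_unique (hG : G.IsTree) {r u u' v : V} (h : G.Adj r u) (h' : G.Adj r u')
    (hv : v ∈ branch G r u) (hv' : v ∈ branch G r u') : u = u' := by
  rw [eq_getVert_one hG h hv, eq_getVert_one hG h' hv']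

lemma branch_of_mem_pth (hG : G.IsTree) {r u v w : V} (hadj : G.Adj r u)
    (hv : v ∈ branch G r u) (hw : w ∈ (pth hG r v).support) (hwr : w ≠ r) :
    w ∈ branch G r u := by
  classical
  rw [mem_branch_iff hG]
  refine ⟨hwr, ?_⟩
  have ht : (pth hG r v).takeUntil w hw = pth hG r w :=
    eq_pth hG ((pth_isPath hG r v).takeUntil hw)
  rw [← ht]
  have hu1 : u = (pth hG r v).getVert 1 := eq_getVert_one hG hadj hv
  have htl : ((pth hG r v).takeUntil w hw).length ≠ 0 := by
    intro h0
    exact hwr (Walk.eq_of_length_eq_zero h0).symm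
  have hkey : ((pth hG r v).takeUntil w hw).getVert 1 = (pth hG r v).getVert 1 := by
    conv_rhs => rw [← (pth hG r v).take_spec hw]
    rw [Walk.getVert_append]
    split_ifs with h
    · rfl
    · have h1 : ((pth hG r v).takeUntil w hw).length = 1 := by omega
      rw [h1]
      simp only [Nat.sub_self, Walk.getVert_zero]
      rw [← h1]
      exact ((pth hG r v).takeUntil w hw).getVert_length
  rw [hu1, ← hkey]
  exact getVert_mem_support _ 1

lemma pth_support_mem (hG : G.IsTree) {s : Set V} (hc : (G.induce s).Connected) {r v : V}
    (hr : r ∈ s) (hv : v ∈ s) : ∀ x ∈ (pth hG r v).support, x ∈ s := by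
  rw [SimpleGraph.connected_induce_iff,
    SimpleGraph.Subgraph.connected_iff_forall_exists_walk_subgraph] at hc
  obtain ⟨p, hp⟩ := hc.2 (by simpa using hr) (by simpa using hv)
  intro x hx
  have h1 : x ∈ p.support := pth_support_subset hG p hx
  have h2 : x ∈ p.toSubgraph.verts := (Walk.mem_verts_toSubgraph p).2 h1
  simpa using SimpleGraph.Subgraph.verts_mono hp h2

lemma connected_of_pth (hG : G.IsTree) {s : Set V} {r : V} (hr : r ∈ s)
    (h : ∀ v ∈ s, ∀ x ∈ (pth hG r v).support, x ∈ s) : (G.induce s).Connected := by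
  apply SimpleGraph.induce_connected_of_patches r hr
  intro v hv
  refine ⟨{x | x ∈ (pth hG r v).support}, fun x hx => h v hv x hx,
    (pth hG r v).start_mem_support, (pth hG r v).end_mem_support,
    ((pth hG r v).connected_induce_support).preconnected _ _⟩

end TreeAux

namespace TreeAux
open Finset SimpleGraph

variable {V : Type*} [Fintype V] (G : SimpleGraph V) (r : V)

noncomputable def NB : Finset V := Finset.univ.filter (fun u => G.Adj r u)

noncomputable def Phi (S : Finset V) (u : V) : Finset V :=
  S.filter (fun x => x ∈ branch G r u ∪ {r})

noncomputable def Psi (f : ∀ u ∈ NB G r, Finset V) : Finset V :=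
  insert r ((NB G r).attach.biUnion (fun u => (f u.1 u.2).erase r))

variable {G r}

lemma mem_NB {u : V} : u ∈ NB G r ↔ G.Adj r u := by simp [NB]

lemma mem_subtreesThrough {S : Finset V} :
    S ∈ subtreesThrough G r ↔ r ∈ S ∧ (G.induce (S : Set V)).Connected := by
  simp [subtreesThrough]

lemma mem_branchSubtrees {s : Finset V} {u : V} :
    s ∈ branchSubtrees G r u ↔
      r ∈ s ∧ (s : Set V) ⊆ branch G r u ∪ {r} ∧ (G.induce (s : Set V)).Connected := by
  simp [branchSubtrees]

lemma singleton_mem_branchSubtrees (u : V) : ({r} : Finset V) ∈ branchSubtrees G r u := by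
  rw [mem_branchSubtrees]
  refine ⟨Finset.mem_singleton_self r, by simp, ?_⟩
  rw [SimpleGraph.connected_iff]
  refine ⟨fun a b => ?_, ⟨⟨r, by simp⟩⟩⟩
  have hab : a = b := Subtype.ext (by
    have ha := a.2; have hb := b.2
    simp only [Finset.coe_singleton, Set.mem_singleton_iff] at ha hb
    rw [ha, hb])
  subst hab
  exact SimpleGraph.Reachable.refl a

lemma singleton_mem_subtreesThrough : ({r} : Finset V) ∈ subtreesThrough G r := by
  rw [mem_subtreesThrough]
  refine ⟨Finset.mem_singleton_self r, ?_⟩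
  rw [SimpleGraph.connected_iff]
  refine ⟨fun a b => ?_, ⟨⟨r, by simp⟩⟩⟩
  have hab : a = b := Subtype.ext (by
    have ha := a.2; have hb := b.2
    simp only [Finset.coe_singleton, Set.mem_singleton_iff] at ha hb
    rw [ha, hb])
  subst hab
  exact SimpleGraph.Reachable.refl a

lemma Phi_mem (hG : G.IsTree) {S : Finset V} (hS : S ∈ subtreesThrough G r) {u : V}
    (hu : G.Adj r u) : Phi G r S u ∈ branchSubtrees G r u := by
  rw [mem_subtreesThrough] at hS
  obtain ⟨hrS, hconn⟩ := hS
  have hrP : r ∈ Phi G r S u := by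
    simp only [Phi, Finset.mem_filter]
    exact ⟨hrS, Or.inr rfl⟩
  rw [mem_branchSubtrees]
  refine ⟨hrP, ?_, ?_⟩
  · intro x hx
    rw [Finset.mem_coe, Phi, Finset.mem_filter] at hx
    exact hx.2
  · apply connected_of_pth hG (r := r) (Finset.mem_coe.2 hrP)
    intro v hv x hx
    rw [Finset.mem_coe, Phi, Finset.mem_filter] at hv
    obtain ⟨hvS, hvb⟩ := hv
    rw [Finset.mem_coe, Phi, Finset.mem_filter]
    have hxS : x ∈ S := Finset.mem_coe.1
      (pth_support_mem hG hconn (Finset.mem_coe.2 hrS) (Finset.mem_coe.2 hvS) x hx)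
    refine ⟨hxS, ?_⟩
    by_cases hxr : x = r
    · exact Or.inr hxr
    · rcases hvb with hvb | hvr
      · exact Or.inl (branch_of_mem_pth hG hu hvb hx hxr)
      · exfalso
        rw [Set.mem_singleton_iff] at hvr
        subst hvr
        rw [pth_self hG] at hx
        exact hxr (List.mem_singleton.1 hx)

variable {f : ∀ u ∈ NB G r, Finset V}

lemma mem_Psi {x : V} :
    x ∈ Psi G r f ↔ x = r ∨ ∃ u : {u // u ∈ NB G r}, x ≠ r ∧ x ∈ f u.1 u.2 := by
  simp only [Psi, Finset.mem_insert, Finset.mem_biUnion, Finset.mem_attach, true_and,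
    Finset.mem_erase]

lemma Psi_mem (hG : G.IsTree)
    (hf : ∀ u (hu : u ∈ NB G r), f u hu ∈ branchSubtrees G r u) :
    Psi G r f ∈ subtreesThrough G r := by
  have hrP : r ∈ Psi G r f := Finset.mem_insert_self r _
  rw [mem_subtreesThrough]
  refine ⟨hrP, ?_⟩
  apply connected_of_pth hG (r := r) (Finset.mem_coe.2 hrP)
  intro v hv x hx
  rw [Finset.mem_coe, mem_Psi] at hv
  rcases hv with rfl | ⟨u, hvr, hvf⟩
  · rw [pth_self hG] at hx
    rw [Finset.mem_coe, List.mem_singleton.1 hx]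
    exact hrP
  · obtain ⟨hrf, hsub, hconn⟩ := mem_branchSubtrees.1 (hf u.1 u.2)
    have hxf : x ∈ f u.1 u.2 := Finset.mem_coe.1
      (pth_support_mem hG hconn (Finset.mem_coe.2 hrf) (Finset.mem_coe.2 hvf) x hx)
    rw [Finset.mem_coe, mem_Psi]
    by_cases hxr : x = r
    · exact Or.inl hxr
    · exact Or.inr ⟨u, hxr, hxf⟩

lemma Phi_Psi (hG : G.IsTree)
    (hf : ∀ u (hu : u ∈ NB G r), f u hu ∈ branchSubtrees G r u)
    {u : V} (hu : u ∈ NB G r) : Phi G r (Psi G r f) u = f u hu := by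
  ext x
  simp only [Phi, Finset.mem_filter, mem_Psi]
  constructor
  · rintro ⟨hx, hxb | hxr⟩
    · have hxr : x ≠ r := hxb.1
      rcases hx with rfl | ⟨u', hxr', hxf'⟩
      · exact absurd rfl hxr
      · have hsub := (mem_branchSubtrees.1 (hf u'.1 u'.2)).2.1
        have hxb' : x ∈ branch G r u'.1 := by
          rcases hsub (Finset.mem_coe.2 hxf') with h | h
          · exact h
          · exact absurd (Set.mem_singleton_iff.1 h) hxr
        obtain ⟨u'', hu''⟩ := u'
        have heq : u'' = u := branch_unique hG (mem_NB.1 hu'') (mem_NB.1 hu) hxb' hxb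
        subst heq
        exact hxf'
    · rw [Set.mem_singleton_iff] at hxr
      subst hxr
      exact (mem_branchSubtrees.1 (hf u hu)).1
  · intro hxf
    have hsub := (mem_branchSubtrees.1 (hf u hu)).2.1
    refine ⟨?_, hsub (Finset.mem_coe.2 hxf)⟩
    by_cases hxr : x = r
    · exact Or.inl hxr
    · exact Or.inr ⟨⟨u, hu⟩, hxr, hxf⟩

lemma Psi_Phi (hG : G.IsTree) {S : Finset V} (hS : S ∈ subtreesThrough G r) :
    Psi G r (fun u _ => Phi G r S u) = S := by
  have hrS := (mem_subtreesThrough.1 hS).1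
  ext x
  rw [mem_Psi]
  constructor
  · rintro (rfl | ⟨u, hxr, hxf⟩)
    · exact hrS
    · exact (Finset.mem_filter.1 hxf).1
  · intro hxS
    by_cases hxr : x = r
    · exact Or.inl hxr
    · obtain ⟨u, hadj, hxb⟩ := exists_adj_branch hG hxr
      refine Or.inr ⟨⟨u, mem_NB.2 hadj⟩, hxr, ?_⟩
      simp only [Phi, Finset.mem_filter]
      exact ⟨hxS, Or.inl hxb⟩

end TreeAux

namespace TreeAux
open Finset SimpleGraph

variable {V : Type*} [Fintype V] {G : SimpleGraph V} {r : V}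
variable {f : ∀ u ∈ NB G r, Finset V}

lemma branch_of_mem_f (hf : ∀ u (hu : u ∈ NB G r), f u hu ∈ branchSubtrees G r u)
    (u : {u // u ∈ NB G r}) {x : V} (hx : x ∈ f u.1 u.2) (hxr : x ≠ r) :
    x ∈ branch G r u.1 := by
  rcases (mem_branchSubtrees.1 (hf u.1 u.2)).2.1 (Finset.mem_coe.2 hx) with h | h
  · exact h
  · exact absurd (Set.mem_singleton_iff.1 h) hxr

lemma card_Psi (hG : G.IsTree)
    (hf : ∀ u (hu : u ∈ NB G r), f u hu ∈ branchSubtrees G r u) :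
    ((Psi G r f).card : ℝ) = 1 + ∑ u ∈ (NB G r).attach, (((f u.1 u.2).card : ℝ) - 1) := by
  have hrmem : ∀ (u : {u // u ∈ NB G r}), r ∈ f u.1 u.2 := fun u =>
    (mem_branchSubtrees.1 (hf u.1 u.2)).1
  have hrnot : r ∉ (NB G r).attach.biUnion (fun u => (f u.1 u.2).erase r) := by simp
  have hdisj : ∀ u ∈ (NB G r).attach, ∀ u' ∈ (NB G r).attach, u ≠ u' →
      Disjoint ((f u.1 u.2).erase r) ((f u'.1 u'.2).erase r) := by
    intro u _ u' _ hne
    rw [Finset.disjoint_left]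
    intro x hx hx'
    rw [Finset.mem_erase] at hx hx'
    have hb : x ∈ branch G r u.1 := branch_of_mem_f hf u hx.2 hx.1
    have hb' : x ∈ branch G r u'.1 := branch_of_mem_f hf u' hx'.2 hx'.1
    exact hne (Subtype.ext (branch_unique hG (mem_NB.1 u.2) (mem_NB.1 u'.2) hb hb'))
  rw [Psi, Finset.card_insert_of_notMem hrnot, Finset.card_biUnion hdisj]
  push_cast
  rw [add_comm]
  congr 1
  apply Finset.sum_congr rfl
  intro u _
  rw [Finset.card_erase_of_mem (hrmem u)]
  have h1 : 1 ≤ (f u.1 u.2).card := Finset.card_pos.2 ⟨r, hrmem u⟩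
  rw [Nat.cast_sub h1, Nat.cast_one]

lemma sum_pi_card (u₀ : V) (hu₀ : u₀ ∈ NB G r) :
    ∑ p ∈ (NB G r).pi (fun u => branchSubtrees G r u), (((p u₀ hu₀).card : ℝ) - 1)
      = (∑ s ∈ branchSubtrees G r u₀, ((s.card : ℝ) - 1)) *
        ∏ u ∈ (NB G r).erase u₀, ((branchSubtrees G r u).card : ℝ) := by
  have key := Finset.prod_sum (NB G r) (fun u => branchSubtrees G r u)
    (fun a b => if a = u₀ then ((b.card : ℝ) - 1) else 1)
  have hinner : ∀ p ∈ (NB G r).pi (fun u => branchSubtrees G r u),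
      ∏ x ∈ (NB G r).attach, (if x.1 = u₀ then ((p x.1 x.2).card : ℝ) - 1 else 1)
        = ((p u₀ hu₀).card : ℝ) - 1 := by
    intro p _
    rw [Finset.prod_eq_single (⟨u₀, hu₀⟩ : {u // u ∈ NB G r})]
    · simp
    · intro x _ hx
      rw [if_neg (fun h => hx (Subtype.ext h))]
    · intro h
      exact absurd (Finset.mem_attach _ _) h
  have hleft : ∏ a ∈ NB G r,
      (∑ b ∈ branchSubtrees G r a, if a = u₀ then ((b.card : ℝ) - 1) else 1)
      = (∑ s ∈ branchSubtrees G r u₀, ((s.card : ℝ) - 1)) *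
        ∏ u ∈ (NB G r).erase u₀, ((branchSubtrees G r u).card : ℝ) := by
    rw [← Finset.mul_prod_erase _ _ hu₀]
    congr 1
    · simp
    · apply Finset.prod_congr rfl
      intro a ha
      have hne : a ≠ u₀ := (Finset.mem_erase.1 ha).1
      simp [hne]
  calc ∑ p ∈ (NB G r).pi (fun u => branchSubtrees G r u), (((p u₀ hu₀).card : ℝ) - 1)
      = ∑ p ∈ (NB G r).pi (fun u => branchSubtrees G r u),
          ∏ x ∈ (NB G r).attach, (if x.1 = u₀ then ((p x.1 x.2).card : ℝ) - 1 else 1) :=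
        (Finset.sum_congr rfl hinner).symm
    _ = ∏ a ∈ NB G r,
          (∑ b ∈ branchSubtrees G r a, if a = u₀ then ((b.card : ℝ) - 1) else 1) := key.symm
    _ = _ := hleft

end TreeAux

/-- For a tree `T` and a vertex `r` with branches `T_i'` (one for each neighbour of
`r`, formed by adding `r` back to a component of `T − r`), the local mean subtree
orders satisfy `μ_T(r) − 1 = ∑ᵢ (μ_{T_i'}(r) − 1)`. -/
theorem stmt9 {V : Type*} [Fintype V] (G : SimpleGraph V) (hG : G.IsTree) (r : V) :
    (∑ s ∈ subtreesThrough G r, (s.card : ℝ)) / (subtreesThrough G r).card - 1 =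
      ∑ u ∈ Finset.univ.filter (fun u => G.Adj r u),
        ((∑ s ∈ branchSubtrees G r u, (s.card : ℝ)) / (branchSubtrees G r u).card - 1) := by
  classical
  open TreeAux Finset in
  have hNB : Finset.univ.filter (fun u => G.Adj r u) = NB G r := rfl
  set N := NB G r with hNdef
  set B := fun u => branchSubtrees G r u with hBdef
  set T := subtreesThrough G r with hTdef
  set P := N.pi (fun u => B u) with hPdef
  -- transport sums across the bijection
  have hbij : ∀ g : Finset V → ℝ, ∑ S ∈ T, g S = ∑ p ∈ P, g (Psi G r p) := by
    intro g
    apply Finset.sum_nbij' (i := fun S => (fun u _ => Phi G r S u : ∀ u ∈ N, Finset V))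
      (j := Psi G r)
    · intro S hS
      rw [hPdef, Finset.mem_pi]
      intro u hu
      exact Phi_mem hG hS (mem_NB.1 hu)
    · intro p hp
      exact Psi_mem hG (fun u hu => Finset.mem_pi.1 (hPdef ▸ hp) u hu)
    · intro S hS
      exact Psi_Phi hG hS
    · intro p hp
      have hf : ∀ u (hu : u ∈ NB G r), p u hu ∈ branchSubtrees G r u :=
        fun u hu => Finset.mem_pi.1 (hPdef ▸ hp) u hu
      funext u hu
      exact Phi_Psi hG hf hu
    · intro S hS
      exact congrArg g (Psi_Phi hG hS).symm
  -- nonvanishing facts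
  have hBne : ∀ u, ((B u).card : ℝ) ≠ 0 := by
    intro u
    have : B u ≠ ∅ := Finset.ne_empty_of_mem (singleton_mem_branchSubtrees u)
    simpa [Finset.card_eq_zero] using this
  have hTne : ((T.card : ℝ)) ≠ 0 := by
    have : T ≠ ∅ := Finset.ne_empty_of_mem singleton_mem_subtreesThrough
    simpa [Finset.card_eq_zero] using this
  -- cardinality of T
  have hcard : (T.card : ℝ) = ∏ u ∈ N, ((B u).card : ℝ) := by
    have h1 := hbij (fun _ => (1 : ℝ))
    rw [Finset.sum_const, Finset.sum_const, hPdef, Finset.card_pi] at h1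
    simpa using h1
  -- sum of (card - 1) over T
  have hsum : ∑ S ∈ T, ((S.card : ℝ) - 1)
      = ∑ u ∈ N.attach, ((∑ s ∈ B u.1, ((s.card : ℝ) - 1)) *
          ∏ u' ∈ N.erase u.1, ((B u').card : ℝ)) := by
    rw [hbij (fun S => ((S.card : ℝ) - 1))]
    have hstep : ∀ p ∈ P, ((Psi G r p).card : ℝ) - 1
        = ∑ u ∈ N.attach, (((p u.1 u.2).card : ℝ) - 1) := by
      intro p hp
      have hf : ∀ u (hu : u ∈ NB G r), p u hu ∈ branchSubtrees G r u :=
        fun u hu => Finset.mem_pi.1 (hPdef ▸ hp) u hu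
      rw [card_Psi hG hf]
      ring
    rw [Finset.sum_congr rfl hstep, Finset.sum_comm]
    apply Finset.sum_congr rfl
    intro u _
    exact sum_pi_card u.1 u.2
  -- rewrite both sides
  have hprodsplit : ∀ u ∈ N, (T.card : ℝ)
      = ((B u).card : ℝ) * ∏ u' ∈ N.erase u, ((B u').card : ℝ) := by
    intro u hu
    rw [hcard, ← Finset.mul_prod_erase _ _ hu]
  have hLHS : (∑ s ∈ T, (s.card : ℝ)) / T.card - 1
      = (∑ S ∈ T, ((S.card : ℝ) - 1)) / T.card := by
    rw [Finset.sum_sub_distrib, Finset.sum_const, sub_div]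
    field_simp
    rw [nsmul_eq_mul, mul_one]
  rw [hNB]
  rw [hLHS, hsum, Finset.sum_div]
  rw [← Finset.sum_attach (NB G r) (fun u =>
    (∑ s ∈ branchSubtrees G r u, (s.card : ℝ)) / (branchSubtrees G r u).card - 1)]
  apply Finset.sum_congr rfl
  intro u _
  have hE : ∏ u' ∈ N.erase u.1, ((B u').card : ℝ) ≠ 0 :=
    Finset.prod_ne_zero_iff.2 (fun u' _ => hBne u')
  rw [hprodsplit u.1 u.2, mul_div_mul_right _ _ hE, Finset.sum_sub_distrib,
    Finset.sum_const, nsmul_eq_mul, mul_one, sub_div, div_self (hBne u.1)]
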